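/- Let G be a Hausdorff topological group with a partial order ≤ compatible with the group operation and respecting the topology (for every g ∈ G the set {x : x < g} is open). Let T₁, …, Tₙ be subsets of the positive cone each locally cofinite at 0, and let Eₙ = T₁ + ⋯ + Tₙ. Then every infinite subset S of Eₙ contains a strictly decreasing sequence. -/

import Mathlib

def LCF0 {G : Type*} [AddGroup G] [TopologicalSpace G] (T : Set G) : Prop :=
  (0 : G) ∉ T ∧ ∀ u : Set G, IsOpen u → (0 : G) ∈ u → (T \ u).Finite

section Aux

variable {G : Type*} [AddGroup G] [TopologicalSpace G] [IsTopologicalAddGroup G]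
    [T2Space G] [PartialOrder G]

lemma ofFn_sum_le (hcompat : ∀ a b c d : G, a ≤ b → c ≤ d → a + c ≤ b + d) :
    ∀ (k : ℕ) (f g : Fin k → G), (∀ i, f i ≤ g i) →
      (List.ofFn f).sum ≤ (List.ofFn g).sum := by
  intro k
  induction k with
  | zero => intro f g _; simp
  | succ k ih =>
    intro f g h
    rw [List.ofFn_succ, List.ofFn_succ, List.sum_cons, List.sum_cons]
    exact hcompat _ _ _ _ (h 0) (ih _ _ fun i => h i.succ)

lemma tendsto_ofFn_sum {α : Type*} {l : Filter α} :
    ∀ (k : ℕ) (f : α → Fin k → G) (c : Fin k → G),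
      (∀ i, Filter.Tendsto (fun m => f m i) l (nhds (c i))) →
      Filter.Tendsto (fun m => (List.ofFn (f m)).sum) l (nhds (List.ofFn c).sum) := by
  intro k
  induction k with
  | zero => intro f c _; simpa using tendsto_const_nhds
  | succ k ih =>
    intro f c h
    simp only [List.ofFn_succ, List.sum_cons]
    exact (h 0).add (ih (fun m i => f m i.succ) (fun i => c i.succ) fun i => h i.succ)

lemma key_lemma
    (hcompat : ∀ a b c d : G, a ≤ b → c ≤ d → a + c ≤ b + d)
    (hopen : ∀ g : G, IsOpen {x : G | x < g})
    (n : ℕ) (T : Fin n → Set G) (hT : ∀ i, LCF0 (T i))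
    (hTpos : ∀ i, T i ⊆ {g : G | 0 < g})
    (S : Set G)
    (hS : S ⊆ {g : G | ∃ t : Fin n → G, (∀ i, t i ∈ T i) ∧ (List.ofFn t).sum = g})
    (hSinf : S.Infinite) :
    ∃ s ∈ S, (S ∩ {x | x < s}).Infinite := by
  classical
  obtain e := hSinf.natEmbedding
  set x : ℕ → G := fun m => (e m : G) with hxdef
  have hxinj : Function.Injective x := fun a b h => e.injective (Subtype.ext h)
  have hxS : ∀ m, x m ∈ S := fun m => (e m).2
  choose t ht hsum using fun m => hS (hxS m)
  set U : Ultrafilter ℕ := Filter.hyperfilter ℕ with hUdef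
  have hUcof : (U : Filter ℕ) ≤ Filter.cofinite := Filter.hyperfilter_le_cofinite
  -- per-coordinate limits
  have hcoord : ∀ i, ∃ ci : G, Filter.Tendsto (fun m => t m i) ↑U (nhds ci) ∧
      ∀ᶠ m in ↑U, ci ≤ t m i := by
    intro i
    by_cases hconst : ∃ a, {m | t m i = a} ∈ U
    · obtain ⟨a, ha⟩ := hconst
      refine ⟨a, tendsto_const_nhds.congr' ?_, ?_⟩
      · filter_upwards [ha] with m hm
        exact hm.symm
      · filter_upwards [ha] with m hm
        exact le_of_eq hm.symm
    · push_neg at hconst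
      refine ⟨0, ?_, Filter.Eventually.of_forall fun m => (hTpos i (ht m i)).le⟩
      rw [Filter.tendsto_def]
      intro s hs
      obtain ⟨u, hus, huo, hu0⟩ := mem_nhds_iff.mp hs
      have hfin : (T i \ u).Finite := (hT i).2 u huo hu0
      have hnot : {m | t m i ∈ T i \ u} ∉ (U : Filter ℕ) := by
        intro hmem
        have hsub : {m | t m i ∈ T i \ u} ⊆ ⋃ a ∈ T i \ u, {m | t m i = a} := by
          intro m hm
          exact Set.mem_biUnion hm rfl
        have : (⋃ a ∈ T i \ u, {m | t m i = a}) ∈ (U : Filter ℕ) :=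
          Filter.mem_of_superset hmem hsub
        obtain ⟨a, _, ha⟩ := (Ultrafilter.finite_biUnion_mem_iff hfin).mp this
        exact hconst a ha
      have hmemu : {m | t m i ∈ u} ∈ (U : Filter ℕ) := by
        have : {m | t m i ∈ u}ᶜ = {m | t m i ∈ T i \ u} := by
          ext m
          simp only [Set.mem_compl_iff, Set.mem_setOf_eq, Set.mem_diff]
          exact ⟨fun h => ⟨ht m i, h⟩, fun h => h.2⟩
        have hc : {m | t m i ∈ u}ᶜ ∉ U := by rw [this]; exact hnot
        exact Ultrafilter.compl_notMem_iff.mp hc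
      exact Filter.mem_of_superset hmemu fun m hm => hus hm
  choose ci hcitend hcile using hcoord
  set c : G := (List.ofFn ci).sum with hcdef
  have hxc : Filter.Tendsto x ↑U (nhds c) := by
    have := tendsto_ofFn_sum n t ci hcitend
    exact this.congr fun m => hsum m
  have hle : ∀ᶠ m in (U : Filter ℕ), c ≤ x m := by
    have hall : ∀ᶠ m in (U : Filter ℕ), ∀ i, ci i ≤ t m i :=
      Filter.eventually_all.mpr hcile
    filter_upwards [hall] with m hm
    calc c ≤ (List.ofFn (t m)).sum := ofFn_sum_le hcompat n ci (t m) hm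
    _ = x m := hsum m
  have hne : ∀ᶠ m in (U : Filter ℕ), x m ≠ c := by
    apply hUcof
    have : {m | x m = c}.Finite := (Set.finite_singleton c).preimage
      (Set.injOn_of_injective hxinj)
    simpa [Filter.mem_cofinite, Set.compl_setOf] using this
  have hlt : ∀ᶠ m in (U : Filter ℕ), c < x m := by
    filter_upwards [hle, hne] with m h1 h2
    exact lt_of_le_of_ne h1 (Ne.symm h2)
  obtain ⟨m₀, hm₀⟩ := hlt.exists
  refine ⟨x m₀, hxS m₀, ?_⟩
  have hB : {m | x m < x m₀} ∈ (U : Filter ℕ) :=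
    hxc ((hopen (x m₀)).mem_nhds hm₀)
  have hBinf : {m | x m < x m₀}.Infinite := by
    by_contra hfin
    rw [Set.not_infinite] at hfin
    exact Filter.notMem_hyperfilter_of_finite hfin hB
  have himg : (x '' {m | x m < x m₀}).Infinite :=
    hBinf.image (Set.injOn_of_injective hxinj)
  refine himg.mono ?_
  rintro _ ⟨m, hm, rfl⟩
  exact ⟨hxS m, hm⟩

end Aux

theorem stmt_12 {G : Type*} [AddGroup G] [TopologicalSpace G] [IsTopologicalAddGroup G]
    [T2Space G] [PartialOrder G]
    (hcompat : ∀ a b c d : G, a ≤ b → c ≤ d → a + c ≤ b + d)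
    (hopen : ∀ g : G, IsOpen {x : G | x < g})
    (n : ℕ) (T : Fin n → Set G) (hT : ∀ i, LCF0 (T i))
    (hTpos : ∀ i, T i ⊆ {g : G | 0 < g})
    (S : Set G)
    (hS : S ⊆ {g : G | ∃ t : Fin n → G, (∀ i, t i ∈ T i) ∧ (List.ofFn t).sum = g})
    (hSinf : S.Infinite) :
    ∃ f : ℕ → G, (∀ k, f k ∈ S) ∧ ∀ k, f (k + 1) < f k := by
  classical
  have step : ∀ A : Set G, A ⊆ S → A.Infinite →
      ∃ s, s ∈ A ∧ (A ∩ {x | x < s}).Infinite := by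
    intro A hA hAinf
    obtain ⟨s, hs1, hs2⟩ := key_lemma hcompat hopen n T hT hTpos A (hA.trans hS) hAinf
    exact ⟨s, hs1, hs2⟩
  choose! sel hsel1 hsel2 using step
  set A : ℕ → Set G := fun k => Nat.rec S (fun _ Ak => Ak ∩ {x | x < sel Ak}) k with hAdef
  have hA0 : A 0 = S := rfl
  have hAsucc : ∀ k, A (k + 1) = A k ∩ {x | x < sel (A k)} := fun k => rfl
  have hinv : ∀ k, A k ⊆ S ∧ (A k).Infinite := by
    intro k
    induction k with
    | zero => exact ⟨le_refl S, hSinf⟩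
    | succ k ih =>
      constructor
      · rw [hAsucc]
        exact (Set.inter_subset_left).trans ih.1
      · rw [hAsucc]
        exact hsel2 (A k) ih.1 ih.2
  refine ⟨fun k => sel (A k), ?_, ?_⟩
  · intro k
    exact (hinv k).1 (hsel1 (A k) (hinv k).1 (hinv k).2)
  · intro k
    have : sel (A (k + 1)) ∈ A (k + 1) :=
      hsel1 (A (k + 1)) (hinv (k + 1)).1 (hinv (k + 1)).2
    rw [hAsucc] at this
    exact this.2
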